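/- Let F be a field and L a Lie algebra over F admitting a basis e₁, e₂, e₃, e₄ whose brackets satisfy ⁅e₂,e₃⁆ = e₁, ⁅e₄,e₁⁆ = e₁, ⁅e₄,e₂⁆ = e₂, and ⁅e₁,e₂⁆ = ⁅e₁,e₃⁆ = ⁅e₃,e₄⁆ = 0 (this is the solvable Lie algebra s₄,₁₁). Then the commuting graph Γ(L) is connected and diam(Γ(L)) = 3. -/

import Mathlib

/-- The commuting graph of a Lie algebra `L` over `F`: vertices are the elements of
`L` outside the center, and two distinct vertices are adjacent iff they commute. -/
def commutingGraph (F : Type*) [CommRing F] (L : Type*) [LieRing L] [LieAlgebra F L] :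
    SimpleGraph {x : L // x ∉ LieAlgebra.center F L} where
  Adj x y := x ≠ y ∧ ⁅(x : L), (y : L)⁆ = 0
  symm := ⟨fun x y h => ⟨h.1.symm, by rw [← lie_skew, h.2, neg_zero]⟩⟩
  loopless := ⟨fun x h => h.1 rfl⟩

/-- Auxiliary: if two vertices are distinct, non-adjacent, and have no common neighbor,
then every walk between them has length at least `3`. -/
lemma three_le_walk_length {α : Type*} {G : SimpleGraph α} {u v : α} (hne : u ≠ v)
    (hadj : ¬ G.Adj u v) (hmid : ∀ z, ¬(G.Adj u z ∧ G.Adj z v)) (w : G.Walk u v) :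
    3 ≤ w.length := by
  match w with
  | .nil => exact absurd rfl hne
  | .cons h .nil => exact absurd h hadj
  | .cons h (.cons h2 .nil) => exact absurd ⟨h, h2⟩ (hmid _)
  | .cons _ (.cons _ (.cons _ w')) =>
      simp only [SimpleGraph.Walk.length_cons]
      omega

/-- for the solvable Lie algebra `s₄,₁₁` over a field `F`, given by a basis
`e₁, e₂, e₃, e₄` with `⁅e₂,e₃⁆ = e₁`, `⁅e₄,e₁⁆ = e₁`, `⁅e₄,e₂⁆ = e₂` and all other brackets
of basis vectors zero, the commuting graph is connected with diameter 3. -/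
theorem stmt18 (F : Type*) [Field F] (L : Type*) [LieRing L] [LieAlgebra F L]
    (b : Module.Basis (Fin 4) F L)
    (h23 : ⁅b 1, b 2⁆ = b 0) (h41 : ⁅b 3, b 0⁆ = b 0) (h42 : ⁅b 3, b 1⁆ = b 1)
    (h12 : ⁅b 0, b 1⁆ = 0) (h13 : ⁅b 0, b 2⁆ = 0) (h34 : ⁅b 2, b 3⁆ = 0) :
    (commutingGraph F L).Connected ∧ (commutingGraph F L).ediam = 3 := by
  have h32 : ⁅b 2, b 1⁆ = -b 0 := by rw [← lie_skew, h23]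
  have h14 : ⁅b 0, b 3⁆ = -b 0 := by rw [← lie_skew, h41]
  have h24 : ⁅b 1, b 3⁆ = -b 1 := by rw [← lie_skew, h42]
  have h21 : ⁅b 1, b 0⁆ = 0 := by rw [← lie_skew, h12, neg_zero]
  have h31 : ⁅b 2, b 0⁆ = 0 := by rw [← lie_skew, h13, neg_zero]
  have h43 : ⁅b 3, b 2⁆ = 0 := by rw [← lie_skew, h34, neg_zero]
  -- the bracket in coordinates
  have hbr : ∀ x y : L, ⁅x, y⁆ =
      (b.repr x 1 * b.repr y 2 - b.repr x 2 * b.repr y 1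
        + b.repr x 3 * b.repr y 0 - b.repr x 0 * b.repr y 3) • b 0
      + (b.repr x 3 * b.repr y 1 - b.repr x 1 * b.repr y 3) • b 1 := by
    intro x y
    conv_lhs => rw [← b.sum_repr x, ← b.sum_repr y]
    simp only [Fin.sum_univ_four, add_lie, lie_add, smul_lie, lie_smul, lie_self,
      h23, h41, h42, h12, h13, h34, h32, h14, h24, h21, h31, h43,
      smul_zero, zero_add, add_zero, smul_neg, smul_smul]
    module
  -- extracting coefficients
  have hcoef : ∀ s t : F, s • b 0 + t • b 1 = 0 → s = 0 ∧ t = 0 := by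
    intro s t h
    have h0 := congrArg (fun z => b.repr z 0) h
    have h1 := congrArg (fun z => b.repr z 1) h
    simp [Module.Basis.repr_self, Finsupp.single_apply] at h0 h1
    exact ⟨h0, h1⟩
  have hco : ∀ x y : L, ⁅x, y⁆ = 0 →
      (b.repr x 1 * b.repr y 2 - b.repr x 2 * b.repr y 1
        + b.repr x 3 * b.repr y 0 - b.repr x 0 * b.repr y 3 = 0
      ∧ b.repr x 3 * b.repr y 1 - b.repr x 1 * b.repr y 3 = 0) :=
    fun x y h => hcoef _ _ ((hbr x y).symm.trans h)
  -- the bracket vanishes iff both coordinates vanish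
  have hzero : ∀ x y : L,
      (b.repr x 1 * b.repr y 2 - b.repr x 2 * b.repr y 1
        + b.repr x 3 * b.repr y 0 - b.repr x 0 * b.repr y 3 = 0) →
      (b.repr x 3 * b.repr y 1 - b.repr x 1 * b.repr y 3 = 0) → ⁅x, y⁆ = 0 := by
    intro x y e0 e1
    rw [hbr x y, e0, e1, zero_smul, zero_smul, add_zero]
  -- the center is trivial
  have hmem : ∀ z : L, z ∈ LieAlgebra.center F L ↔ z = 0 := by
    intro z
    constructor
    · intro hz
      rw [LieAlgebra.center, LieModule.mem_maxTrivSubmodule] at hz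
      obtain ⟨e3a, e3b⟩ := hco (b 3) z (hz (b 3))
      obtain ⟨e1a, e1b⟩ := hco (b 1) z (hz (b 1))
      simp [Module.Basis.repr_self, Finsupp.single_apply] at e3a e3b e1a e1b
      have : b.repr z = 0 := by
        ext i
        fin_cases i <;> simpa using by first | exact e3a | exact e3b | exact e1a | exact e1b
      simpa using b.repr.map_eq_zero_iff.mp this
    · rintro rfl
      exact (LieAlgebra.center F L).zero_mem
  have hvert : ∀ x : L, x ≠ 0 → x ∉ LieAlgebra.center F L :=
    fun x hx h => hx ((hmem x).mp h)
  -- one step in the graph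
  have hstep : ∀ u w : {x : L // x ∉ LieAlgebra.center F L}, ⁅(u : L), (w : L)⁆ = 0 →
      (commutingGraph F L).edist u w ≤ 1 := by
    intro u w h
    by_cases he : u = w
    · subst he; simp
    · exact le_of_eq (SimpleGraph.edist_eq_one_iff_adj.mpr ⟨he, h⟩)
  -- every vertex commutes with some nonzero element of the abelian span of `b 0, b 2`
  have key : ∀ u : {x : L // x ∉ LieAlgebra.center F L},
      ∃ y : L, y ≠ 0 ∧ b.repr y 1 = 0 ∧ b.repr y 3 = 0 ∧ ⁅(u : L), y⁆ = 0 := by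
    rintro ⟨x, hx⟩
    have hx0 : x ≠ 0 := fun h => hx (h ▸ (LieAlgebra.center F L).zero_mem)
    by_cases h3 : b.repr x 3 = 0
    · by_cases h1 : b.repr x 1 = 0
      · exact ⟨x, hx0, h1, h3, lie_self x⟩
      · refine ⟨b 0, b.ne_zero 0, ?_, ?_, ?_⟩
        · simp [Module.Basis.repr_self, Finsupp.single_apply]
        · simp [Module.Basis.repr_self, Finsupp.single_apply]
        · apply hzero <;> simp [Module.Basis.repr_self, Finsupp.single_apply, h3]
    · refine ⟨(-(b.repr x 1) / (b.repr x 3)) • b 0 + b 2, ?_, ?_, ?_, ?_⟩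
      · intro h
        have := congrArg (fun z => b.repr z 2) h
        simp [Module.Basis.repr_self, Finsupp.single_apply] at this
      · simp [Module.Basis.repr_self, Finsupp.single_apply]
      · simp [Module.Basis.repr_self, Finsupp.single_apply]
      · apply hzero <;> (simp [Module.Basis.repr_self, Finsupp.single_apply]; try field_simp; try ring)
  -- distance at most 3 between any two vertices
  have hle3 : ∀ u v : {x : L // x ∉ LieAlgebra.center F L},
      (commutingGraph F L).edist u v ≤ 3 := by
    intro u v
    obtain ⟨y, hy0, hy1, hy3, hyc⟩ := key u
    obtain ⟨z, hz0, hz1, hz3, hzc⟩ := key v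
    set yv : {x : L // x ∉ LieAlgebra.center F L} := ⟨y, hvert y hy0⟩
    set zv : {x : L // x ∉ LieAlgebra.center F L} := ⟨z, hvert z hz0⟩
    have e1 : (commutingGraph F L).edist u yv ≤ 1 := hstep _ _ hyc
    have e2 : (commutingGraph F L).edist yv zv ≤ 1 := by
      apply hstep
      apply hzero <;> simp [yv, zv, hy1, hy3, hz1, hz3]
    have e3 : (commutingGraph F L).edist zv v ≤ 1 := by
      apply hstep
      have : ⁅(v : L), z⁆ = 0 := hzc
      rw [← lie_skew, this, neg_zero]
    calc (commutingGraph F L).edist u v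
        ≤ (commutingGraph F L).edist u yv + (commutingGraph F L).edist yv v :=
          SimpleGraph.edist_triangle
      _ ≤ (commutingGraph F L).edist u yv +
          ((commutingGraph F L).edist yv zv + (commutingGraph F L).edist zv v) :=
          add_le_add_right SimpleGraph.edist_triangle _
      _ ≤ 1 + (1 + 1) := by gcongr
      _ = 3 := by norm_num
  -- the two extremal vertices
  set u1 : {x : L // x ∉ LieAlgebra.center F L} := ⟨b 1, hvert _ (b.ne_zero 1)⟩
  set u3 : {x : L // x ∉ LieAlgebra.center F L} := ⟨b 3, hvert _ (b.ne_zero 3)⟩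
  have hne13 : u1 ≠ u3 := by
    intro h
    have : b 1 = b 3 := congrArg Subtype.val h
    exact (b.injective.ne (by decide : (1 : Fin 4) ≠ 3)) this
  have hnadj : ¬ (commutingGraph F L).Adj u1 u3 := by
    rintro ⟨-, hc⟩
    have : ⁅b 1, b 3⁆ = 0 := hc
    rw [h24, neg_eq_zero] at this
    exact b.ne_zero 1 this
  have hmid : ∀ z, ¬((commutingGraph F L).Adj u1 z ∧ (commutingGraph F L).Adj z u3) := by
    rintro ⟨z, hz⟩ ⟨⟨-, hc1⟩, ⟨-, hc2⟩⟩
    obtain ⟨e1a, e1b⟩ := hco (b 1) z hc1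
    obtain ⟨e2a, e2b⟩ := hco z (b 3) hc2
    simp [Module.Basis.repr_self, Finsupp.single_apply] at e1a e1b e2a e2b
    apply hz
    rw [hmem]
    have : b.repr z = 0 := by
      ext i
      fin_cases i <;> simpa using by first | exact e1a | exact e1b | exact e2a | exact e2b
    simpa using b.repr.map_eq_zero_iff.mp this
  have hlow : (3 : ℕ∞) ≤ (commutingGraph F L).edist u1 u3 := by
    rw [SimpleGraph.edist_eq_sInf]
    apply le_sInf
    rintro _ ⟨w, rfl⟩
    show (3 : ℕ∞) ≤ (w.length : ℕ∞)
    exact_mod_cast three_le_walk_length hne13 hnadj hmid w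
  constructor
  · have hne : Nonempty {x : L // x ∉ LieAlgebra.center F L} := ⟨u1⟩
    refine SimpleGraph.Connected.mk ?_
    intro u v
    apply SimpleGraph.reachable_of_edist_ne_top
    intro h
    have h3 := hle3 u v
    rw [h] at h3
    simp at h3
  · exact le_antisymm (SimpleGraph.ediam_le_iff.mpr hle3)
      (le_trans hlow SimpleGraph.edist_le_ediam)
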